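/- Let d ≥ 2. Then w(E) − (1 + x_1²) ∈ J, where E = [A,B,C,C] if d ≡ 0 mod 2, E = [A,B,B] if d ≡ 1 mod 4, and E = A if d ≡ 3 mod 4. Since x_1² ∉ J, the class of w(E) in F_2[x_1,…,x_d]/J is 1 + [x_1²] ≠ 1; in particular its degree-1 component vanishes and its degree-2 component is nonzero. -/

import Mathlib

open MvPolynomial

abbrev S4 : Type := ZMod 2 × ZMod 2

def Sα (s : S4) : ZMod 2 := s.1
def Sβ (s : S4) : ZMod 2 := s.2

def s0 : S4 := (0, 0)
def s1 : S4 := (1, 1)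
def s2 : S4 := (1, 0)
def s3 : S4 := (0, 1)

/-- The linear form `α_j^A = Σ_i α(A_{ij}) x_i`. -/
noncomputable def alphaP {d : ℕ} {ι : Type*} (A : Matrix (Fin d) ι S4) (j : ι) :
    MvPolynomial (Fin d) (ZMod 2) := ∑ i, C (Sα (A i j)) * X i

/-- The linear form `β_j^A = Σ_i β(A_{ij}) x_i`. -/
noncomputable def betaP {d : ℕ} {ι : Type*} (A : Matrix (Fin d) ι S4) (j : ι) :
    MvPolynomial (Fin d) (ZMod 2) := ∑ i, C (Sβ (A i j)) * X i

/-- `θ_j^A = α_j^A · β_j^A`. -/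
noncomputable def thetaP {d : ℕ} {ι : Type*} (A : Matrix (Fin d) ι S4) (j : ι) :
    MvPolynomial (Fin d) (ZMod 2) := alphaP A j * betaP A j

/-- The characteristic ideal `I_A = ⟨θ_1^A, …, θ_n^A⟩`. -/
noncomputable def charIdeal {d : ℕ} {ι : Type*} (A : Matrix (Fin d) ι S4) :
    Ideal (MvPolynomial (Fin d) (ZMod 2)) := Ideal.span (Set.range (thetaP A))

/-- The Stiefel–Whitney polynomial `w(A) = Π_j (1 + α_j^A + β_j^A)`. -/
noncomputable def swPoly {d : ℕ} {ι : Type*} [Fintype ι] (A : Matrix (Fin d) ι S4) :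
    MvPolynomial (Fin d) (ZMod 2) := ∏ j, (1 + alphaP A j + betaP A j)

/-- The ideal `J = ⟨{x_i² + x_j² : i ≠ j} ∪ {x_i x_j : i ≠ j}⟩`. -/
noncomputable def Jideal (d : ℕ) : Ideal (MvPolynomial (Fin d) (ZMod 2)) :=
  Ideal.span ({q | ∃ i j : Fin d, i ≠ j ∧ q = X i ^ 2 + X j ^ 2} ∪
              {q | ∃ i j : Fin d, i ≠ j ∧ q = X i * X j})

/-- `A₀ ∈ S^{d×(d-1)}`: the `l`-th column has entry `1` in rows `l` and `d`, `0` elsewhere. -/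
def matA0 (d : ℕ) : Matrix (Fin d) (Fin (d - 1)) S4 :=
  fun i l => if i.val = l.val ∨ i.val = d - 1 then s1 else s0

/-- Index set for the columns of `A₁`: pairs `1 ≤ i < j ≤ d`. -/
abbrev PairIdx (d : ℕ) : Type := {p : Fin d × Fin d // p.1 < p.2}

/-- `A₁ ∈ S^{d×(d(d-1)/2)}`: the column indexed by `i < j` has entry `2` in row `i`,
entry `3` in row `j` and `0` elsewhere. -/
def matA1 (d : ℕ) : Matrix (Fin d) (PairIdx d) S4 :=
  fun i p => if i = p.1.1 then s2 else if i = p.1.2 then s3 else s0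

/-- `A = [A₀, A₁]`. -/
def matA (d : ℕ) : Matrix (Fin d) (Fin (d - 1) ⊕ PairIdx d) S4 :=
  Matrix.fromCols (matA0 d) (matA1 d)

/-- `B ∈ S^{d×1}`: all entries `2`. -/
def matB (d : ℕ) : Matrix (Fin d) (Fin 1) S4 := fun _ _ => s2

/-- `C ∈ S^{d×1}`: entry `2` in row `1`, `0` elsewhere. -/
def matC (d : ℕ) : Matrix (Fin d) (Fin 1) S4 := fun i _ => if i.val = 0 then s2 else s0

/-- `E = [A,B,C,C]` (the case `d ≡ 0 mod 2`). -/
def matE0 (d : ℕ) := Matrix.fromCols (matA d)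
  (Matrix.fromCols (matB d) (Matrix.fromCols (matC d) (matC d)))

/-- `E = [A,B,B]` (the case `d ≡ 1 mod 4`). -/
def matE1 (d : ℕ) := Matrix.fromCols (matA d) (Matrix.fromCols (matB d) (matB d))

/-- `F = [E,C,C,C,C] = [A,C,C,C,C]` (the case `d ≡ 3 mod 4`; there `E = A`). -/
def matF3 (d : ℕ) := Matrix.fromCols (matA d)
  (Matrix.fromCols (matC d)
    (Matrix.fromCols (matC d) (Matrix.fromCols (matC d) (matC d))))
section SWAux
set_option synthInstance.maxHeartbeats 1000000
set_option maxHeartbeats 1000000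
open Finset

variable {d : ℕ}

private abbrev Rp (d : ℕ) := MvPolynomial (Fin d) (ZMod 2)

private noncomputable abbrev mkJ (d : ℕ) : Rp d →+* (Rp d ⧸ Jideal d) :=
  Ideal.Quotient.mk (Jideal d)

private lemma XX_mem {i j : Fin d} (h : i ≠ j) : (X i * X j : Rp d) ∈ Jideal d :=
  Ideal.subset_span (Or.inr ⟨i, j, h, rfl⟩)

private lemma sq_add_sq_mem {i j : Fin d} (h : i ≠ j) :
    (X i ^ 2 + X j ^ 2 : Rp d) ∈ Jideal d :=
  Ideal.subset_span (Or.inl ⟨i, j, h, rfl⟩)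

private lemma two_eq_zero : (2 : Rp d) = 0 := by
  have h : C (2 : ZMod 2) = (2 : Rp d) := map_ofNat C 2
  rw [← h, show (2 : ZMod 2) = 0 by decide, map_zero]

private lemma add_self_R (a : Rp d) : a + a = 0 := by
  rw [← two_mul, two_eq_zero, zero_mul]

private lemma xq_mul_xq {i j : Fin d} (h : i ≠ j) :
    mkJ d (X i) * mkJ d (X j) = 0 := by
  rw [← map_mul, Ideal.Quotient.eq_zero_iff_mem]
  exact XX_mem h

private lemma xq_sq (i j : Fin d) : mkJ d (X i ^ 2) = mkJ d (X j ^ 2) := by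
  rcases eq_or_ne i j with rfl | h
  · rfl
  · rw [Ideal.Quotient.eq, sub_eq_add_neg,
      neg_eq_of_add_eq_zero_left (add_self_R (X j ^ 2))]
    exact sq_add_sq_mem h

private lemma xq_cube (hd : 2 ≤ d) (i : Fin d) :
    mkJ d (X i) * mkJ d (X i ^ 2) = 0 := by
  set i0 : Fin d := ⟨0, by omega⟩
  set i1 : Fin d := ⟨1, by omega⟩
  have h01 : i0 ≠ i1 := by simp [i0, i1, Fin.ext_iff]
  obtain ⟨j, hj⟩ : ∃ j : Fin d, j ≠ i := by
    rcases eq_or_ne i i0 with rfl | h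
    · exact ⟨i1, h01.symm⟩
    · exact ⟨i0, fun hc => h (hc.symm)⟩
  rw [xq_sq i j, show (X j ^ 2 : Rp d) = X j * X j by ring, map_mul, ← mul_assoc,
    xq_mul_xq hj.symm, zero_mul]

private lemma tau_mul_x (hd : 2 ≤ d) (i j : Fin d) :
    mkJ d (X i ^ 2) * mkJ d (X j) = 0 := by
  rcases eq_or_ne i j with rfl | h
  · rw [mul_comm]; exact xq_cube hd i
  · rw [show (X i ^ 2 : Rp d) = X i * X i by ring, map_mul, mul_assoc,
      xq_mul_xq h, mul_zero]

private lemma tau_sq (hd : 2 ≤ d) (i : Fin d) : mkJ d (X i ^ 2) ^ 2 = 0 := by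
  rw [show (X i ^ 2 : Rp d) = X i * X i by ring, map_mul]
  have := tau_mul_x hd i i
  rw [show (X i ^ 2 : Rp d) = X i * X i by ring, map_mul] at this
  calc (mkJ d (X i) * mkJ d (X i)) ^ 2
      = (mkJ d (X i) * mkJ d (X i) * mkJ d (X i)) * mkJ d (X i) := by ring
    _ = 0 := by rw [this, zero_mul]








private lemma two_eq_zero_Q : (2 : Rp d ⧸ Jideal d) = 0 := by
  rw [← map_ofNat (mkJ d) 2, two_eq_zero, map_zero]

private lemma add_self_Q (a : Rp d ⧸ Jideal d) : a + a = 0 := by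
  rw [← two_mul, two_eq_zero_Q, zero_mul]

private lemma ysq (hd : 2 ≤ d) (i j : Fin d) :
    (mkJ d (1 + X i)) ^ 2 = 1 + mkJ d (X j ^ 2) := by
  rw [← map_pow, show ((1 + X i : Rp d)) ^ 2 = 1 + 2 * X i + X i ^ 2 by ring,
    two_eq_zero, zero_mul, add_zero, (mkJ d).map_add 1 (X i ^ 2), map_one, xq_sq i j]

private lemma u_sq (hd : 2 ≤ d) (i : Fin d) : (1 + mkJ d (X i ^ 2)) ^ 2 = 1 := by
  have h : (1 + mkJ d (X i ^ 2)) ^ 2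
      = 1 + (mkJ d (X i ^ 2) + mkJ d (X i ^ 2)) + mkJ d (X i ^ 2) ^ 2 := by ring
  rw [h, add_self_Q, tau_sq hd i, add_zero, add_zero]

private lemma u_pow (hd : 2 ≤ d) (i : Fin d) (m : ℕ) :
    (1 + mkJ d (X i ^ 2)) ^ m = (1 + mkJ d (X i ^ 2)) ^ (m % 2) := by
  conv_lhs => rw [← Nat.div_add_mod m 2]
  rw [pow_add, pow_mul, u_sq hd i, one_pow, one_mul]

private lemma pair_factor {a b : Fin d} (h : a ≠ b) :
    mkJ d (1 + X a + X b) = mkJ d (1 + X a) * mkJ d (1 + X b) := by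
  rw [← map_mul, Ideal.Quotient.eq]
  have he : (1 + X a + X b : Rp d) - (1 + X a) * (1 + X b) = -(X a * X b) := by ring
  rw [he]
  exact neg_mem (XX_mem h)

private lemma prod_one_add_X (s : Finset (Fin d)) :
    ∏ i ∈ s, mkJ d (1 + X i) = 1 + mkJ d (∑ i ∈ s, X i) := by
  induction s using Finset.induction_on with
  | empty => simp
  | @insert a s ha ih =>
    rw [Finset.prod_insert ha, ih, Finset.sum_insert ha]
    have hprod : mkJ d (X a) * mkJ d (∑ i ∈ s, X i) = 0 := by
      rw [map_sum, Finset.mul_sum]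
      exact Finset.sum_eq_zero fun i hi => xq_mul_xq (fun h => ha (h ▸ hi))
    have : mkJ d (1 + X a) * (1 + mkJ d (∑ i ∈ s, X i))
        = 1 + (mkJ d (X a) + mkJ d (∑ i ∈ s, X i))
          + mkJ d (X a) * mkJ d (∑ i ∈ s, X i) := by
      rw [(mkJ d).map_add 1 (X a), map_one]; ring
    rw [this, hprod, add_zero, (mkJ d).map_add (X a)]

private lemma prod_pairs {M : Type*} [CommMonoid M] (f : Fin d → M) :
    ∏ p : PairIdx d, (f p.1.1 * f p.1.2) = ∏ i, f i ^ (d - 1) := by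
  classical
  have h1 : ∏ p : PairIdx d, (f p.1.1 * f p.1.2)
      = ∏ p ∈ Finset.univ.filter (fun p : Fin d × Fin d => p.1 < p.2), f p.1 * f p.2 :=
    (Finset.prod_subtype (Finset.univ.filter fun p : Fin d × Fin d => p.1 < p.2)
      (fun x => by simp) (fun p => f p.1 * f p.2)).symm
  rw [h1, Finset.prod_filter, ← Finset.univ_product_univ, Finset.prod_product]
  have h2 : ∀ i j : Fin d, (if (i, j).1 < (i, j).2 then f (i, j).1 * f (i, j).2 else 1)
      = (if i < j then f i else 1) * (if i < j then f j else 1) := by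
    intro i j; by_cases h : i < j <;> simp [h]
  simp_rw [h2, Finset.prod_mul_distrib]
  have hfst : ∀ i : Fin d, (∏ j : Fin d, if i < j then f i else 1)
      = f i ^ (d - 1 - i.val) := by
    intro i
    rw [← Finset.prod_filter, Finset.prod_const,
      show (Finset.univ.filter fun j => i < j) = Finset.Ioi i by ext j; simp,
      Fin.card_Ioi]
  have hsnd : (∏ i : Fin d, ∏ j : Fin d, if i < j then f j else 1)
      = ∏ j : Fin d, f j ^ j.val := by
    rw [Finset.prod_comm]
    refine Finset.prod_congr rfl fun j _ => ?_
    rw [← Finset.prod_filter, Finset.prod_const,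
      show (Finset.univ.filter fun i => i < j) = Finset.Iio j by ext i; simp,
      Fin.card_Iio]
  simp_rw [hfst]
  rw [hsnd, ← Finset.prod_mul_distrib]
  refine Finset.prod_congr rfl fun i _ => ?_
  rw [← pow_add]
  congr 1
  have := i.isLt
  omega








private lemma swPoly_fromColumns {ι κ : Type*} [Fintype ι] [Fintype κ]
    (M : Matrix (Fin d) ι S4) (N : Matrix (Fin d) κ S4) :
    swPoly (Matrix.fromCols M N) = swPoly M * swPoly N := by
  rw [swPoly, swPoly, swPoly, Fintype.prod_sum_type]
  congr 1 <;> refine Finset.prod_congr rfl fun j _ => ?_ <;>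
    simp [alphaP, betaP, Matrix.fromCols]

private lemma swPoly_matA0 : swPoly (matA0 d) = 1 := by
  rw [swPoly]
  refine Finset.prod_eq_one fun j _ => ?_
  have h : alphaP (matA0 d) j = betaP (matA0 d) j := by
    rw [alphaP, betaP]
    refine Finset.sum_congr rfl fun i _ => ?_
    congr 1
    unfold matA0 Sα Sβ
    split <;> rfl
  rw [h, add_assoc, add_self_R, add_zero]

private lemma alphaP_matA1 (p : PairIdx d) : alphaP (matA1 d) p = X p.1.1 := by
  rw [alphaP, Finset.sum_eq_single p.1.1]
  · simp [matA1, Sα, s2]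
  · intro i _ hne
    rcases eq_or_ne i p.1.2 with rfl | h2
    · simp [matA1, hne, Sα, s3]
    · simp [matA1, hne, h2, Sα, s0]
  · simp

private lemma betaP_matA1 (p : PairIdx d) : betaP (matA1 d) p = X p.1.2 := by
  have hne : p.1.2 ≠ p.1.1 := (ne_of_lt p.2).symm
  rw [betaP, Finset.sum_eq_single p.1.2]
  · simp [matA1, hne, Sβ, s3]
  · intro i _ hne2
    rcases eq_or_ne i p.1.1 with rfl | h1
    · simp [matA1, Sβ, s2]
    · simp [matA1, h1, hne2, Sβ, s0]
  · simp

private lemma swPoly_matB : swPoly (matB d) = 1 + ∑ i, (X i : Rp d) := by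
  rw [swPoly, Fin.prod_univ_one]
  have ha : alphaP (matB d) 0 = ∑ i, (X i : Rp d) := by
    simp [alphaP, matB, Sα, s2]
  have hb : betaP (matB d) 0 = 0 := by
    simp [betaP, matB, Sβ, s2]
  rw [ha, hb, add_zero]

private lemma swPoly_matC (h0 : 0 < d) :
    swPoly (matC d) = 1 + X (⟨0, h0⟩ : Fin d) := by
  rw [swPoly, Fin.prod_univ_one]
  have ha : alphaP (matC d) 0 = X (⟨0, h0⟩ : Fin d) := by
    rw [alphaP, Finset.sum_eq_single (⟨0, h0⟩ : Fin d)]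
    · simp [matC, Sα, s2]
    · intro i _ hne
      have : i.val ≠ 0 := by simpa [Fin.ext_iff] using hne
      simp [matC, this, Sα, s0]
    · simp
  have hb : betaP (matC d) 0 = 0 := by
    refine Finset.sum_eq_zero fun i _ => ?_
    unfold matC Sβ s2 s0
    split <;> simp
  rw [ha, hb, add_zero]

private lemma mk_swPoly_matA1 (hd : 2 ≤ d) :
    mkJ d (swPoly (matA1 d)) = ∏ i, mkJ d (1 + X i) ^ (d - 1) := by
  rw [swPoly, map_prod]
  have h : ∀ p : PairIdx d, mkJ d (1 + alphaP (matA1 d) p + betaP (matA1 d) p)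
      = mkJ d (1 + X p.1.1) * mkJ d (1 + X p.1.2) := fun p => by
    rw [alphaP_matA1, betaP_matA1, pair_factor (ne_of_lt p.2)]
  rw [Finset.prod_congr rfl fun p _ => h p, prod_pairs (fun i => mkJ d (1 + X i))]

private lemma mk_swPoly_matB (hd : 2 ≤ d) :
    mkJ d (swPoly (matB d)) = ∏ i, mkJ d (1 + X i) := by
  rw [swPoly_matB, prod_one_add_X, (mkJ d).map_add, map_one]

private lemma prod_y_even (hd : 2 ≤ d) (m : ℕ) (i0 : Fin d) :
    ∏ i, mkJ d (1 + X i) ^ (2 * m) = (1 + mkJ d (X i0 ^ 2)) ^ (d * m) := by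
  have h : ∀ i : Fin d, mkJ d (1 + X i) ^ (2 * m) = ((1 + mkJ d (X i0 ^ 2)) ^ m) := by
    intro i
    rw [pow_mul, ysq hd i i0]
  rw [Finset.prod_congr rfl fun i _ => h i, Finset.prod_const, Finset.card_univ,
    Fintype.card_fin, ← pow_mul, mul_comm m d]








private noncomputable def lam (p : Rp d) : ZMod 2 :=
  ∑ k, MvPolynomial.coeff (Finsupp.single k 2) p

private lemma lam_add (p q : Rp d) : lam (p + q) = lam p + lam q := by
  simp [lam, MvPolynomial.coeff_add, Finset.sum_add_distrib]

private lemma single_sub_single (k : Fin d) :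
    (Finsupp.single k 2 - Finsupp.single k 1 : Fin d →₀ ℕ) = Finsupp.single k 1 := by
  ext a
  rcases eq_or_ne a k with rfl | h
  · simp
  · simp [Finsupp.single_apply, Ne.symm h]

private lemma coeff_mul_sq (q : Rp d) (i k : Fin d) :
    MvPolynomial.coeff (Finsupp.single k 2) (q * X i ^ 2)
      = if k = i then MvPolynomial.coeff 0 q else 0 := by
  rw [show (X i ^ 2 : Rp d) = X i * X i by ring, ← mul_assoc,
    MvPolynomial.coeff_mul_X']
  rcases eq_or_ne k i with rfl | h
  · rw [if_pos (by simp), if_pos rfl, single_sub_single,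
      MvPolynomial.coeff_mul_X', if_pos (by simp)]
    congr 1
    simp
  · rw [if_neg (by simp [Finsupp.support_single_ne_zero, Ne.symm h]), if_neg h]

private lemma coeff_mul_XX (q : Rp d) {i j : Fin d} (hij : i ≠ j) (k : Fin d) :
    MvPolynomial.coeff (Finsupp.single k 2) (q * (X i * X j)) = 0 := by
  rw [← mul_assoc, MvPolynomial.coeff_mul_X']
  rcases eq_or_ne j k with rfl | h
  · rw [if_pos (by simp), single_sub_single, MvPolynomial.coeff_mul_X',
      if_neg (by simp [Finsupp.support_single_ne_zero, hij])]
  · rw [if_neg (by simp [Finsupp.support_single_ne_zero, h])]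

private lemma lam_mul_mem {p : Rp d} (hp : p ∈ Jideal d) : ∀ q : Rp d, lam (q * p) = 0 := by
  refine Submodule.span_induction ?_ ?_ ?_ ?_ hp
  · rintro x hx q
    rcases hx with ⟨i, j, hij, rfl⟩ | ⟨i, j, hij, rfl⟩
    · rw [mul_add, lam_add, lam, lam]
      have h1 : ∑ k, MvPolynomial.coeff (Finsupp.single k 2) (q * X i ^ 2)
          = MvPolynomial.coeff 0 q := by
        simp_rw [coeff_mul_sq]
        rw [Finset.sum_ite_eq' Finset.univ i fun _ => MvPolynomial.coeff 0 q,
          if_pos (Finset.mem_univ i)]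
      have h2 : ∑ k, MvPolynomial.coeff (Finsupp.single k 2) (q * X j ^ 2)
          = MvPolynomial.coeff 0 q := by
        simp_rw [coeff_mul_sq]
        rw [Finset.sum_ite_eq' Finset.univ j fun _ => MvPolynomial.coeff 0 q,
          if_pos (Finset.mem_univ j)]
      rw [h1, h2, ← two_mul, show (2 : ZMod 2) = 0 by decide, zero_mul]
    · rw [lam]
      exact Finset.sum_eq_zero fun k _ => coeff_mul_XX q hij k
  · intro q; rw [mul_zero, lam]; simp
  · intro x y _ _ ihx ihy q
    rw [mul_add, lam_add, ihx, ihy, add_zero]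
  · intro a x _ ih q
    rw [smul_eq_mul, ← mul_assoc]
    exact ih (q * a)

private lemma lam_Xsq (i0 : Fin d) : lam (X i0 ^ 2 : Rp d) = 1 := by
  rw [lam]
  have h : ∀ k : Fin d, MvPolynomial.coeff (Finsupp.single k 2) (X i0 ^ 2 : Rp d)
      = if k = i0 then 1 else 0 := by
    intro k
    rw [MvPolynomial.coeff_X_pow]
    congr 1
    rw [eq_iff_iff]
    constructor
    · intro h; exact ((Finsupp.single_left_inj (by norm_num)).mp h).symm
    · rintro rfl; rfl
  simp_rw [h]
  rw [Finset.sum_ite_eq' Finset.univ i0 fun _ => (1 : ZMod 2), if_pos (Finset.mem_univ i0)]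

private lemma Xsq_not_mem (i0 : Fin d) : (X i0 ^ 2 : Rp d) ∉ Jideal d := by
  intro h
  have := lam_mul_mem h 1
  rw [one_mul, lam_Xsq] at this
  exact one_ne_zero this


end SWAux


/-- for `d ≥ 2`, `w(E) - (1 + x₁²) ∈ J` (with `E` as in the three cases),
while `x₁² ∉ J`. -/

theorem sw_matE (d : ℕ) (hd : 2 ≤ d) :
    (d % 2 = 0 → swPoly (matE0 d) - (1 + X (⟨0, by omega⟩ : Fin d) ^ 2) ∈ Jideal d) ∧
    (d % 4 = 1 → swPoly (matE1 d) - (1 + X (⟨0, by omega⟩ : Fin d) ^ 2) ∈ Jideal d) ∧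
    (d % 4 = 3 → swPoly (matA d) - (1 + X (⟨0, by omega⟩ : Fin d) ^ 2) ∈ Jideal d) ∧
    X (⟨0, by omega⟩ : Fin d) ^ 2 ∉ Jideal d := by
  have h0 : 0 < d := by omega
  set i0 : Fin d := ⟨0, h0⟩ with hi0
  refine ⟨?_, ?_, ?_, Xsq_not_mem _⟩
  · -- d even
    intro h
    rw [← Ideal.Quotient.eq]
    have key : mkJ d (swPoly (matE0 d)) = mkJ d (1 + X i0 ^ 2) := by
      unfold matE0 matA
      rw [swPoly_fromColumns, swPoly_fromColumns, swPoly_fromColumns, swPoly_fromColumns,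
        swPoly_matA0, one_mul]
      simp only [map_mul]
      rw [mk_swPoly_matA1 hd, mk_swPoly_matB hd, swPoly_matC h0]
      have hCC : mkJ d (1 + X i0) * mkJ d (1 + X i0) = 1 + mkJ d (X i0 ^ 2) := by
        rw [← sq, ysq hd i0 i0]
      have hPQ : (∏ i, mkJ d (1 + X i) ^ (d - 1)) * (∏ i, mkJ d (1 + X i)) = 1 := by
        rw [← Finset.prod_mul_distrib]
        have : ∀ i : Fin d, mkJ d (1 + X i) ^ (d - 1) * mkJ d (1 + X i)
            = mkJ d (1 + X i) ^ (2 * (d / 2)) := by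
          intro i; rw [← pow_succ]; congr 1; omega
        rw [Finset.prod_congr rfl fun i _ => this i, prod_y_even hd (d / 2) i0,
          u_pow hd i0]
        have he : d * (d / 2) % 2 = 0 := by rw [Nat.mul_mod, h]; simp
        rw [he, pow_zero]
      rw [hCC, ← mul_assoc, hPQ, one_mul, (mkJ d).map_add 1 (X i0 ^ 2), map_one]
    exact key
  · -- d ≡ 1 mod 4
    intro h
    rw [← Ideal.Quotient.eq]
    have key : mkJ d (swPoly (matE1 d)) = mkJ d (1 + X i0 ^ 2) := by
      unfold matE1 matA
      rw [swPoly_fromColumns, swPoly_fromColumns, swPoly_fromColumns,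
        swPoly_matA0, one_mul]
      simp only [map_mul]
      rw [mk_swPoly_matA1 hd, mk_swPoly_matB hd]
      have hyd : (∏ i, mkJ d (1 + X i) ^ (d - 1)) *
          ((∏ i, mkJ d (1 + X i)) * (∏ i, mkJ d (1 + X i)))
          = ∏ i, mkJ d (1 + X i) ^ (2 * ((d + 1) / 2)) := by
        rw [← Finset.prod_mul_distrib, ← Finset.prod_mul_distrib]
        refine Finset.prod_congr rfl fun i _ => ?_
        rw [← sq, ← pow_add]
        congr 1; omega
      rw [hyd, prod_y_even hd ((d + 1) / 2) i0, u_pow hd i0]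
      have h1 : d % 2 = 1 := by omega
      have h2 : ((d + 1) / 2) % 2 = 1 := by omega
      have he : d * ((d + 1) / 2) % 2 = 1 := by rw [Nat.mul_mod, h1, h2]
      rw [he, pow_one, (mkJ d).map_add 1 (X i0 ^ 2), map_one]
    exact key
  · -- d ≡ 3 mod 4
    intro h
    rw [← Ideal.Quotient.eq]
    have key : mkJ d (swPoly (matA d)) = mkJ d (1 + X i0 ^ 2) := by
      unfold matA
      rw [swPoly_fromColumns, swPoly_matA0, one_mul, mk_swPoly_matA1 hd]
      have hyd : (∏ i, mkJ d (1 + X i) ^ (d - 1))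
          = ∏ i, mkJ d (1 + X i) ^ (2 * ((d - 1) / 2)) := by
        refine Finset.prod_congr rfl fun i _ => ?_
        congr 1; omega
      rw [hyd, prod_y_even hd ((d - 1) / 2) i0, u_pow hd i0]
      have h1 : d % 2 = 1 := by omega
      have h2 : ((d - 1) / 2) % 2 = 1 := by omega
      have he : d * ((d - 1) / 2) % 2 = 1 := by rw [Nat.mul_mod, h1, h2]
      rw [he, pow_one, (mkJ d).map_add 1 (X i0 ^ 2), map_one]
    exact key
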